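/- arXiv:1101.0279 — 3 statements merged into one kernel-verified Lean document; each statement's English description precedes it below -/
import Mathlib

section
/- Let n ≥ 2, σ ∈ (0,2), and 0 < λ ≤ nΛ. Let v : ℝ^n → ℝ be bounded and Lebesgue measurable, and let x ∈ ℝ^n be such that ∫_{ℝ^n} |δv(x,y)|/|y|^{n+σ} dy < ∞. If the matrix h_σ(v,x) is positive semidefinite, then its smallest eigenvalue satisfies λ_min(h_σ(v,x)) ≤ (C/λ)·M⁻(v,x), where C = ((n+σ−2)(n+σ)/2)·A(n,2−σ)/(2−σ). -/
open MeasureTheory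

noncomputable section

/-- The second difference `δw(x,y) = w(x+y) + w(x-y) - 2 w(x)`. -/
def secondDiff {n : ℕ} (w : EuclideanSpace ℝ (Fin n) → ℝ)
    (x y : EuclideanSpace ℝ (Fin n)) : ℝ :=
  w (x + y) + w (x - y) - 2 * w x

/-- The constant `A(n,α) = π^{α - n/2} Γ((n-α)/2) / Γ(α/2)`. -/
def rieszA (n : ℕ) (α : ℝ) : ℝ :=
  Real.pi ^ (α - (n : ℝ) / 2) * Real.Gamma (((n : ℝ) - α) / 2) / Real.Gamma (α / 2)

/-- The quadratic form `yᵀ A y`. -/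
def quadForm {n : ℕ} (A : Matrix (Fin n) (Fin n) ℝ) (y : EuclideanSpace ℝ (Fin n)) : ℝ :=
  ∑ i, ∑ j, A i j * y i * y j

/-- The matrix `h_σ(v,x)`. -/
def hMat (n : ℕ) (σ : ℝ) (v : EuclideanSpace ℝ (Fin n) → ℝ)
    (x : EuclideanSpace ℝ (Fin n)) : Matrix (Fin n) (Fin n) ℝ :=
  Matrix.of fun i j =>
    (((n : ℝ) + σ - 2) * ((n : ℝ) + σ) / 2) * rieszA n (2 - σ) *
      ∫ y : EuclideanSpace ℝ (Fin n),
        secondDiff v x y * (y i * y j) / ‖y‖ ^ ((n : ℝ) + σ + 2)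

/-- The extremal (minimal) operator `M⁻(v,x)`, an infimum over symmetric positive
semidefinite matrices `A` with `Tr A ≥ λ` and `A ≤ Λ·Id`. -/
def Mminus (n : ℕ) (σ lam Lam : ℝ) (v : EuclideanSpace ℝ (Fin n) → ℝ)
    (x : EuclideanSpace ℝ (Fin n)) : ℝ :=
  sInf { z | ∃ A : Matrix (Fin n) (Fin n) ℝ, A.PosSemidef ∧ lam ≤ A.trace ∧
      (Lam • (1 : Matrix (Fin n) (Fin n) ℝ) - A).PosSemidef ∧
      z = (2 - σ) * ∫ y : EuclideanSpace ℝ (Fin n),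
        secondDiff v x y * quadForm A y / ‖y‖ ^ ((n : ℝ) + σ + 2) }

private lemma psd_diag_nonneg {m : Type*} [Fintype m] [DecidableEq m] {M : Matrix m m ℝ}
    (h : M.PosSemidef) (i : m) : 0 ≤ M i i := by
  exact h.diag_nonneg

private lemma trace_nonneg_of_psd {m : Type*} [Fintype m] [DecidableEq m] {M : Matrix m m ℝ}
    (h : M.PosSemidef) : 0 ≤ M.trace :=
  Finset.sum_nonneg fun i _ => psd_diag_nonneg h i

private lemma trace_mul_nonneg' {m : Type*} [Fintype m] [DecidableEq m] {A B : Matrix m m ℝ}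
    (hA : A.PosSemidef) (hB : B.PosSemidef) : 0 ≤ (A * B).trace := by
  obtain ⟨C, rfl⟩ : ∃ C : Matrix m m ℝ, A = star C * C := by
    open scoped MatrixOrder in exact CStarAlgebra.nonneg_iff_eq_star_mul_self.mp hA.nonneg
  rw [Matrix.mul_assoc, Matrix.trace_mul_comm]
  exact trace_nonneg_of_psd (hB.mul_mul_conjTranspose_same C)

private lemma sub_smul_one_psd {m : Type*} [Fintype m] [DecidableEq m] {M : Matrix m m ℝ}
    (hM : M.IsHermitian) {μ : ℝ} (h : ∀ i, μ ≤ hM.eigenvalues i) :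
    (M - μ • 1).PosSemidef := by
  have hU : (hM.eigenvectorUnitary : Matrix m m ℝ) * star (hM.eigenvectorUnitary : Matrix m m ℝ) = 1 :=
    (Matrix.mem_unitaryGroup_iff).mp hM.eigenvectorUnitary.2
  have key : M - μ • 1 =
      (hM.eigenvectorUnitary : Matrix m m ℝ) *
        (Matrix.diagonal (fun i => hM.eigenvalues i - μ)) *
        star (hM.eigenvectorUnitary : Matrix m m ℝ) := by
    nth_rewrite 1 [hM.spectral_theorem]
    rw [Unitary.conjStarAlgAut_apply]
    have h1 : Matrix.diagonal (fun i => hM.eigenvalues i - μ) =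
        Matrix.diagonal (RCLike.ofReal ∘ hM.eigenvalues) - μ • 1 := by
      rw [Matrix.smul_one_eq_diagonal, ← Matrix.diagonal_sub]
      rfl
    rw [h1, Matrix.mul_sub, Matrix.sub_mul, Matrix.mul_smul, Matrix.smul_mul, Matrix.mul_one, hU]
  rw [key, Matrix.star_eq_conjTranspose]
  exact Matrix.PosSemidef.mul_mul_conjTranspose_same
    (Matrix.posSemidef_diagonal_iff.mpr fun i => sub_nonneg.mpr (h i)) _

/-- if `h_σ(v,x)` is positive semidefinite, its smallest eigenvalue is at most
`(C/λ)·M⁻(v,x)` with `C = ((n+σ-2)(n+σ)/2)·A(n,2-σ)/(2-σ)`. -/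
theorem stmt0 (n : ℕ) (hn : 2 ≤ n) (σ lam Lam : ℝ) (hσ : σ ∈ Set.Ioo (0 : ℝ) 2)
    (hlam : 0 < lam) (hlamLam : lam ≤ (n : ℝ) * Lam)
    (v : EuclideanSpace ℝ (Fin n) → ℝ)
    (hb : ∃ C : ℝ, ∀ z, |v z| ≤ C) (hm : Measurable v)
    (x : EuclideanSpace ℝ (Fin n))
    (hint : Integrable (fun y : EuclideanSpace ℝ (Fin n) =>
      |secondDiff v x y| / ‖y‖ ^ ((n : ℝ) + σ)))
    (hpsd : (hMat n σ v x).PosSemidef) :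
    (⨅ i, hpsd.1.eigenvalues i) ≤
      ((((n : ℝ) + σ - 2) * ((n : ℝ) + σ) / 2) * rieszA n (2 - σ) / (2 - σ)) / lam *
        Mminus n σ lam Lam v x := by
  obtain ⟨hσ0, hσ2⟩ := hσ
  have hn2 : (2 : ℝ) ≤ (n : ℝ) := by exact_mod_cast hn
  haveI : Nonempty (Fin n) := ⟨⟨0, by omega⟩⟩
  set c0 : ℝ := (((n : ℝ) + σ - 2) * ((n : ℝ) + σ) / 2) * rieszA n (2 - σ) with hc0def
  have hc0 : 0 < c0 := by
    have hA : 0 < rieszA n (2 - σ) := by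
      unfold rieszA
      have g1 : 0 < Real.Gamma (((n : ℝ) - (2 - σ)) / 2) := Real.Gamma_pos_of_pos (by linarith)
      have g2 : 0 < Real.Gamma ((2 - σ) / 2) := Real.Gamma_pos_of_pos (by linarith)
      have g3 : (0 : ℝ) < Real.pi ^ ((2 - σ) - (n : ℝ) / 2) := Real.rpow_pos_of_pos Real.pi_pos _
      positivity
    have p1 : (0 : ℝ) < (n : ℝ) + σ - 2 := by linarith
    have p2 : (0 : ℝ) < (n : ℝ) + σ := by linarith
    exact mul_pos (div_pos (mul_pos p1 p2) two_pos) hA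
  set μ : ℝ := ⨅ i, hpsd.1.eigenvalues i with hμdef
  have hμ0 : 0 ≤ μ := le_ciInf fun i => hpsd.eigenvalues_nonneg i
  have hμle : ∀ i, μ ≤ hpsd.1.eigenvalues i := fun i =>
    ciInf_le (Set.Finite.bddBelow (Set.finite_range _)) i
  -- integrability of each entry integrand
  have hg : ∀ i j : Fin n, Integrable (fun y : EuclideanSpace ℝ (Fin n) =>
      secondDiff v x y * (y i * y j) / ‖y‖ ^ ((n : ℝ) + σ + 2)) := by
    intro i j
    refine hint.mono' ?_ ?_
    · have hδ : Measurable (fun y : EuclideanSpace ℝ (Fin n) => secondDiff v x y) := by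
        unfold secondDiff
        exact ((hm.comp (measurable_const.add measurable_id)).add
          (hm.comp (measurable_const.sub measurable_id))).sub measurable_const
      have hcoord : ∀ k : Fin n, Measurable (fun y : EuclideanSpace ℝ (Fin n) => y k) :=
        fun k => by fun_prop
      have hr : Measurable (fun y : EuclideanSpace ℝ (Fin n) => ‖y‖ ^ ((n : ℝ) + σ + 2)) :=
        (continuous_norm.rpow_const (fun y => Or.inr
          (by have : (0 : ℝ) ≤ n := Nat.cast_nonneg n; linarith))).measurable
      exact ((hδ.mul ((hcoord i).mul (hcoord j))).div hr).aestronglyMeasurable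
    · filter_upwards with y
      rcases eq_or_ne y 0 with rfl | hy
      · simp
        positivity
      · have hy0 : 0 < ‖y‖ := norm_pos_iff.mpr hy
        have hcoord : ∀ k : Fin n, |y k| ≤ ‖y‖ := by
          intro k
          rw [EuclideanSpace.norm_eq]
          have h2 : |y k| = Real.sqrt (‖y k‖ ^ 2) := by
            rw [Real.sqrt_sq_eq_abs, Real.norm_eq_abs, abs_abs]
          rw [h2]
          exact Real.sqrt_le_sqrt (Finset.single_le_sum (f := fun l => ‖y l‖ ^ 2)
            (fun l _ => sq_nonneg _) (Finset.mem_univ k))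
        have hnum : |y i * y j| ≤ ‖y‖ ^ 2 := by
          rw [abs_mul, sq]
          exact mul_le_mul (hcoord i) (hcoord j) (abs_nonneg _) (norm_nonneg _)
        have hsplit : ‖y‖ ^ ((n : ℝ) + σ + 2) = ‖y‖ ^ ((n : ℝ) + σ) * ‖y‖ ^ 2 := by
          rw [Real.rpow_add hy0, Real.rpow_two]
        rw [Real.norm_eq_abs, abs_div, abs_mul, abs_of_nonneg (by positivity :
          (0 : ℝ) ≤ ‖y‖ ^ ((n : ℝ) + σ + 2)), hsplit]
        rw [div_le_div_iff₀ (by positivity) (by positivity)]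
        calc |secondDiff v x y| * |y i * y j| * ‖y‖ ^ ((n : ℝ) + σ)
            ≤ |secondDiff v x y| * ‖y‖ ^ 2 * ‖y‖ ^ ((n : ℝ) + σ) :=
              mul_le_mul_of_nonneg_right (mul_le_mul_of_nonneg_left hnum (abs_nonneg _))
                (Real.rpow_nonneg (norm_nonneg y) _)
          _ = |secondDiff v x y| * (‖y‖ ^ ((n : ℝ) + σ) * ‖y‖ ^ 2) := by ring
  have hHij : ∀ i j, hMat n σ v x i j = c0 *
      ∫ y : EuclideanSpace ℝ (Fin n), secondDiff v x y * (y i * y j) / ‖y‖ ^ ((n : ℝ) + σ + 2) :=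
    fun i j => rfl
  have hsym : ∀ i j, hMat n σ v x j i = hMat n σ v x i j := fun i j => by
    rw [← hpsd.1.apply j i, star_trivial]
  -- every member of the defining set is bounded below
  have hkey : ∀ z ∈ { z | ∃ A : Matrix (Fin n) (Fin n) ℝ, A.PosSemidef ∧ lam ≤ A.trace ∧
      (Lam • (1 : Matrix (Fin n) (Fin n) ℝ) - A).PosSemidef ∧
      z = (2 - σ) * ∫ y : EuclideanSpace ℝ (Fin n),
        secondDiff v x y * quadForm A y / ‖y‖ ^ ((n : ℝ) + σ + 2) },
      (2 - σ) * lam / c0 * μ ≤ z := by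
    rintro z ⟨A, hA, htr, -, rfl⟩
    have hsum : (∫ y : EuclideanSpace ℝ (Fin n),
        secondDiff v x y * quadForm A y / ‖y‖ ^ ((n : ℝ) + σ + 2))
        = ∑ i, ∑ j, A i j * ∫ y : EuclideanSpace ℝ (Fin n),
            secondDiff v x y * (y i * y j) / ‖y‖ ^ ((n : ℝ) + σ + 2) := by
      have e1 : (fun y : EuclideanSpace ℝ (Fin n) =>
          secondDiff v x y * quadForm A y / ‖y‖ ^ ((n : ℝ) + σ + 2))
          = fun y => ∑ i, ∑ j, A i j *
              (secondDiff v x y * (y i * y j) / ‖y‖ ^ ((n : ℝ) + σ + 2)) := by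
        funext y
        simp only [quadForm, Finset.mul_sum, Finset.sum_div]
        refine Finset.sum_congr rfl fun i _ => Finset.sum_congr rfl fun j _ => ?_
        ring
      rw [e1]
      refine (integral_finsetSum _ (fun i _ =>
        integrable_finsetSum _ (fun j _ => (hg i j).const_mul _))).trans ?_
      refine Finset.sum_congr rfl fun i _ => ?_
      rw [integral_finsetSum _ (fun j _ => (hg i j).const_mul _)]
      exact Finset.sum_congr rfl fun j _ => integral_const_mul _ _
    have hS : ∑ i, ∑ j, A i j * hMat n σ v x i j = (A * hMat n σ v x).trace := by
      rw [Matrix.trace]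
      refine Finset.sum_congr rfl fun i _ => ?_
      rw [Matrix.diag_apply, Matrix.mul_apply]
      exact Finset.sum_congr rfl fun j _ => by rw [hsym i j]
    have hpsd2 : (hMat n σ v x - μ • 1).PosSemidef := sub_smul_one_psd hpsd.1 hμle
    have h3 : 0 ≤ (A * (hMat n σ v x - μ • 1)).trace := trace_mul_nonneg' hA hpsd2
    have h4 : (A * (hMat n σ v x - μ • 1)).trace
        = (A * hMat n σ v x).trace - μ * A.trace := by
      rw [Matrix.mul_sub, Matrix.trace_sub, Matrix.mul_smul, Matrix.mul_one, Matrix.trace_smul]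
      simp [smul_eq_mul]
    have hSge : μ * lam ≤ (A * hMat n σ v x).trace := by
      have h5 : μ * lam ≤ μ * A.trace := mul_le_mul_of_nonneg_left htr hμ0
      linarith
    have e2 : ∑ i, ∑ j, A i j * ∫ y : EuclideanSpace ℝ (Fin n),
        secondDiff v x y * (y i * y j) / ‖y‖ ^ ((n : ℝ) + σ + 2)
        = (A * hMat n σ v x).trace / c0 := by
      rw [← hS, Finset.sum_div]
      refine Finset.sum_congr rfl fun i _ => ?_
      rw [Finset.sum_div]
      refine Finset.sum_congr rfl fun j _ => ?_
      rw [hHij i j]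
      field_simp
    rw [hsum, e2]
    calc (2 - σ) * lam / c0 * μ = (2 - σ) * ((μ * lam) / c0) := by ring
      _ ≤ (2 - σ) * ((A * hMat n σ v x).trace / c0) := by gcongr
  -- the set is nonempty
  have hne : Set.Nonempty { z | ∃ A : Matrix (Fin n) (Fin n) ℝ, A.PosSemidef ∧ lam ≤ A.trace ∧
      (Lam • (1 : Matrix (Fin n) (Fin n) ℝ) - A).PosSemidef ∧
      z = (2 - σ) * ∫ y : EuclideanSpace ℝ (Fin n),
        secondDiff v x y * quadForm A y / ‖y‖ ^ ((n : ℝ) + σ + 2) } := by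
    refine ⟨_, Matrix.diagonal (fun _ : Fin n => lam / n), ?_, ?_, ?_, rfl⟩
    · exact Matrix.PosSemidef.diagonal (by intro i; positivity)
    · rw [Matrix.trace_diagonal]
      have hn0 : ((n : ℝ)) ≠ 0 := by positivity
      simp [Finset.sum_const, Finset.card_univ]
      rw [mul_div_cancel₀ _ hn0]
    · rw [Matrix.smul_one_eq_diagonal, Matrix.diagonal_sub]
      refine Matrix.PosSemidef.diagonal ?_
      intro i
      have hn0 : (0 : ℝ) < (n : ℝ) := by linarith
      simp only [Pi.sub_apply, Pi.zero_apply]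
      rw [sub_nonneg, div_le_iff₀ hn0]
      linarith [hlamLam]
  have hinf : (2 - σ) * lam / c0 * μ ≤ Mminus n σ lam Lam v x := le_csInf hne hkey
  -- final algebra
  have hσ2' : (0:ℝ) < 2 - σ := by linarith
  have hk : 0 < (c0 / (2 - σ)) / lam := div_pos (div_pos hc0 hσ2') hlam
  have hmul := mul_le_mul_of_nonneg_left hinf hk.le
  have hid : (c0 / (2 - σ)) / lam * ((2 - σ) * lam / c0 * μ) = μ := by
    field_simp
  rw [hid] at hmul
  exact hmul
end
end

section
/- Let n ≥ 2, σ ∈ (0,2), λ > 0, f₀ > 0 and ρ₀ > 0. Let Γ : ℝ^n → ℝ be Lebesgue measurable, bounded below, and attain its global minimum at a point x₀ ∈ ℝ^n. Define A := {y ∈ ℝ^n : Γ(x₀+y) − Γ(x₀) ≤ f₀|y|^σ}, r_k := ρ₀·2^{−k}, and the rings R_k := {y ∈ ℝ^n : r_{k+1} < |y| ≤ r_k} for k ∈ ℕ. Assume that λ(2−σ)·∫_{ℝ^n} δΓ(x₀,y)·y₁²/|y|^{n+σ+2} dy ≤ f₀, where y₁ denotes the first coordinate of y (the integrand is nonnegative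 since x₀ is a global minimum). Then there is a constant C(n) > 0 depending only on n such that the number of indices k ∈ ℕ with |Aᶜ ∩ R_k| ≥ ½|R_k| is at most C(n)/((2−σ)λ), where |·| denotes Lebesgue measure. -/
open MeasureTheory
open scoped ENNReal

noncomputable section

lemma abs_apply_le_norm {n : ℕ} (y : EuclideanSpace ℝ (Fin n)) (i : Fin n) : |y i| ≤ ‖y‖ := by
  rw [EuclideanSpace.norm_eq, ← Real.sqrt_sq_eq_abs]
  apply Real.sqrt_le_sqrt
  calc y i ^ 2 = ‖y i‖ ^ 2 := by rw [Real.norm_eq_abs, sq_abs]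
  _ ≤ ∑ j, ‖y j‖ ^ 2 := Finset.single_le_sum (f := fun j => ‖y j‖ ^ 2)
      (fun j _ => sq_nonneg _) (Finset.mem_univ i)

lemma slab_volume {n : ℕ} (i : Fin n) (δ r : ℝ) :
    volume {y : EuclideanSpace ℝ (Fin n) | |y i| ≤ δ ∧ ‖y‖ ≤ r} ≤
      ENNReal.ofReal (2*δ) * ENNReal.ofReal (2*r) ^ (n-1) := by
  set T : Set (Fin n → ℝ) :=
    Set.univ.pi (fun j => if j = i then Set.Icc (-δ) δ else Set.Icc (-r) r) with hT
  have hTm : MeasurableSet T := MeasurableSet.univ_pi (fun j => by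
    split <;> exact measurableSet_Icc)
  have hsub : {y : EuclideanSpace ℝ (Fin n) | |y i| ≤ δ ∧ ‖y‖ ≤ r} ⊆
      (MeasurableEquiv.toLp 2 (Fin n → ℝ)).symm ⁻¹' T := by
    intro y hy
    simp only [Set.mem_preimage, hT, Set.mem_pi, Set.mem_univ, forall_true_left]
    intro j
    have : (MeasurableEquiv.toLp 2 (Fin n → ℝ)).symm y j = y j := rfl
    rw [this]
    split
    · next h => subst h; exact Set.mem_Icc.2 (abs_le.1 hy.1)
    · exact Set.mem_Icc.2 (abs_le.1 ((abs_apply_le_norm y j).trans hy.2))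
  calc volume {y : EuclideanSpace ℝ (Fin n) | |y i| ≤ δ ∧ ‖y‖ ≤ r}
      ≤ volume ((MeasurableEquiv.toLp 2 (Fin n → ℝ)).symm ⁻¹' T) := measure_mono hsub
    _ = volume T := (EuclideanSpace.volume_preserving_symm_measurableEquiv_toLp (Fin n)).measure_preimage
        hTm.nullMeasurableSet
    _ ≤ ENNReal.ofReal (2*δ) * ENNReal.ofReal (2*r) ^ (n-1) := by
        rw [hT, volume_pi_pi]
        rw [Fintype.prod_eq_mul_prod_compl i]
        rw [if_pos rfl, Real.volume_Icc]
        have : ∀ j ∈ ({i}ᶜ : Finset (Fin n)), volume (if j = i then Set.Icc (-δ) δ else Set.Icc (-r) r) = ENNReal.ofReal (2*r) := by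
          intro j hj
          rw [if_neg (by simpa using hj), Real.volume_Icc]
          norm_num [two_mul]
        rw [Finset.prod_congr rfl this, Finset.prod_const, Finset.card_compl,
          Finset.card_singleton, Fintype.card_fin]
        gcongr
        linarith


set_option maxHeartbeats 6000000 in
/-- the number of "bad" dyadic rings `R_k` on which the complement of the set
`A = {y : Γ(x₀+y) - Γ(x₀) ≤ f₀ |y|^σ}` covers at least half of the ring is at most
`C(n)/((2-σ)λ)`. -/
theorem stmt4 (n : ℕ) (hn : 2 ≤ n) :
    ∃ C : ℝ, 0 < C ∧
      ∀ (σ lam f₀ ρ₀ : ℝ), σ ∈ Set.Ioo (0 : ℝ) 2 → 0 < lam → 0 < f₀ → 0 < ρ₀ →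
      ∀ (Γ : EuclideanSpace ℝ (Fin n) → ℝ), Measurable Γ →
      ∀ x₀ : EuclideanSpace ℝ (Fin n),
      (∀ z, Γ x₀ ≤ Γ z) →
      (ENNReal.ofReal (lam * (2 - σ)) *
          ∫⁻ y : EuclideanSpace ℝ (Fin n),
            ENNReal.ofReal (secondDiff Γ x₀ y * (y (⟨0, by omega⟩ : Fin n)) ^ 2 / ‖y‖ ^ ((n : ℝ) + σ + 2))
        ≤ ENNReal.ofReal f₀) →
      -- the set `A` and the rings `R_k`
      (let A : Set (EuclideanSpace ℝ (Fin n)) :=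
          {y | Γ (x₀ + y) - Γ x₀ ≤ f₀ * ‖y‖ ^ σ}
       let R : ℕ → Set (EuclideanSpace ℝ (Fin n)) :=
          fun k => {y | ρ₀ / 2 ^ (k + 1) < ‖y‖ ∧ ‖y‖ ≤ ρ₀ / 2 ^ k}
       let bad : Set ℕ := {k | volume (R k) ≤ 2 * volume (Aᶜ ∩ R k)}
       bad.Finite ∧ (Nat.card bad : ℝ) ≤ C / ((2 - σ) * lam)) := by
  classical
  have hn0 : 0 < n := by omega
  set B : ℝ≥0∞ := volume (Metric.ball (0 : EuclideanSpace ℝ (Fin n)) 1) with hB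
  have hBpos : 0 < B := Metric.measure_ball_pos volume _ one_pos
  have hBfin : B ≠ ⊤ := measure_ball_lt_top.ne
  set K : ℝ := B.toReal with hK
  have hKpos : 0 < K := ENNReal.toReal_pos hBpos.ne' hBfin
  set ε : ℝ := 3 * K / (16 * 2 ^ (n - 1)) with hε
  have hεpos : 0 < ε := by positivity
  set c : ℝ := ε ^ 2 * 3 * K / 256 with hc
  have hcpos : 0 < c := by positivity
  refine ⟨1 / c, by positivity, ?_⟩
  rintro σ lam f₀ ρ₀ ⟨hσ0, hσ2⟩ hlam hf₀ hρ₀ Γ hΓ x₀ hmin hint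
  intro A R bad
  set i0 : Fin n := ⟨0, by omega⟩ with hi0
  set p : ℝ := (n : ℝ) + σ + 2 with hp
  have hppos : 0 < p := by rw [hp]; positivity
  set g : EuclideanSpace ℝ (Fin n) → ℝ≥0∞ :=
    fun y => ENNReal.ofReal (secondDiff Γ x₀ y * (y i0) ^ 2 / ‖y‖ ^ p) with hg
  have hint' : ENNReal.ofReal (lam * (2 - σ)) * ∫⁻ y, g y ≤ ENNReal.ofReal f₀ := hint
  set r : ℕ → ℝ := fun k => ρ₀ / 2 ^ k with hr
  have hrpos : ∀ k, 0 < r k := fun k => by rw [hr]; positivity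
  have hrsucc : ∀ k, r (k + 1) = r k / 2 := fun k => by
    simp only [hr]; rw [pow_succ, ← div_div]
  have hrmono : ∀ {a b : ℕ}, a ≤ b → r b ≤ r a := fun {a b} hab => by
    simp only [hr]
    gcongr
    exact one_le_two
  have hRdef : ∀ k (y : EuclideanSpace ℝ (Fin n)), y ∈ R k ↔ (r (k+1) < ‖y‖ ∧ ‖y‖ ≤ r k) :=
    fun k y => Iff.rfl
  set E : ℕ → Set (EuclideanSpace ℝ (Fin n)) :=
    fun k => (Aᶜ ∩ R k) ∩ {y | ε * r (k+1) < |y i0|} with hE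
  -- measurability
  have hAm : MeasurableSet A := by
    apply measurableSet_le
    · exact (hΓ.comp (measurable_const.add measurable_id)).sub measurable_const
    · exact measurable_const.mul (((Real.continuous_rpow_const hσ0.le).comp continuous_norm).measurable)
  have hRm : ∀ k, MeasurableSet (R k) := fun k =>
    (measurableSet_lt measurable_const measurable_norm).inter
      (measurableSet_le measurable_norm measurable_const)
  have hEm : ∀ k, MeasurableSet (E k) := fun k =>
    (hAm.compl.inter (hRm k)).inter
      (measurableSet_lt measurable_const ((EuclideanSpace.proj (𝕜 := ℝ) i0).continuous.measurable.abs))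
  -- volume of closed balls
  have hcb : ∀ s : ℝ, 0 ≤ s →
      volume (Metric.closedBall (0 : EuclideanSpace ℝ (Fin n)) s) = ENNReal.ofReal (s ^ n) * B := by
    intro s hs
    rw [Measure.addHaar_closedBall volume _ hs, finrank_euclideanSpace_fin]
  -- lower bound for the volume of the rings
  have hRvol : ∀ k, ENNReal.ofReal (3/4 * r k ^ n) * B ≤ volume (R k) := by
    intro k
    have hsub1 : Metric.closedBall (0 : EuclideanSpace ℝ (Fin n)) (r k)
        ⊆ Metric.closedBall 0 (r (k+1)) ∪ R k := by
      intro y hy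
      rw [Metric.mem_closedBall, dist_zero_right] at hy
      by_cases h : ‖y‖ ≤ r (k+1)
      · exact Or.inl (by rwa [Metric.mem_closedBall, dist_zero_right])
      · exact Or.inr ⟨not_le.1 h, hy⟩
    have h24 : (4:ℝ) ≤ 2 ^ n := by
      calc (4:ℝ) = 2 ^ 2 := by norm_num
      _ ≤ 2 ^ n := pow_le_pow_right₀ one_le_two hn
    have h4 : r (k+1) ^ n ≤ 1/4 * r k ^ n := by
      rw [hrsucc k, div_pow, show (1:ℝ)/4 * r k ^ n = r k ^ n / 4 by ring]
      gcongr
    have e1 : ENNReal.ofReal (r k ^ n) * B ≤ ENNReal.ofReal (1/4 * r k ^ n) * B + volume (R k) := by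
      calc ENNReal.ofReal (r k ^ n) * B = volume (Metric.closedBall 0 (r k)) :=
            (hcb _ (hrpos k).le).symm
      _ ≤ volume (Metric.closedBall 0 (r (k+1)) ∪ R k) := measure_mono hsub1
      _ ≤ volume (Metric.closedBall (0 : EuclideanSpace ℝ (Fin n)) (r (k+1))) + volume (R k) :=
            measure_union_le _ _
      _ ≤ _ := by
            rw [hcb _ (hrpos _).le]
            gcongr
    have e2 : ENNReal.ofReal (r k ^ n) * B
        = ENNReal.ofReal (3/4 * r k ^ n) * B + ENNReal.ofReal (1/4 * r k ^ n) * B := by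
      have hre : (3:ℝ)/4 * r k ^ n + 1/4 * r k ^ n = r k ^ n := by ring
      rw [← add_mul, ← ENNReal.ofReal_add (by positivity) (by positivity), hre]
    rw [e2, add_comm (ENNReal.ofReal (1/4 * r k ^ n) * B) (volume (R k))] at e1
    exact (ENNReal.add_le_add_iff_right (ENNReal.mul_ne_top ENNReal.ofReal_ne_top hBfin)).1 e1
  -- slab volume bound
  have hslab : ∀ k, volume {y : EuclideanSpace ℝ (Fin n) | |y i0| ≤ ε * r (k+1) ∧ ‖y‖ ≤ r k}
      ≤ ENNReal.ofReal (3/16 * r k ^ n) * B := by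
    intro k
    have h2n : (2:ℝ) ^ (n-1) ≠ 0 := by positivity
    have key : 2 * (ε * r (k+1)) * (2 * r k) ^ (n-1) = 3/16 * r k ^ n * K := by
      have hn1 : n - 1 + 1 = n := by omega
      rw [hrsucc k, mul_pow, hε, ← hn1, pow_succ (r k) (n-1)]
      field_simp
      ring_nf; simp
    calc volume {y : EuclideanSpace ℝ (Fin n) | |y i0| ≤ ε * r (k+1) ∧ ‖y‖ ≤ r k}
        ≤ ENNReal.ofReal (2 * (ε * r (k+1))) * ENNReal.ofReal (2 * r k) ^ (n-1) :=
          slab_volume i0 _ _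
      _ = ENNReal.ofReal (2 * (ε * r (k+1)) * (2 * r k) ^ (n-1)) := by
          rw [← ENNReal.ofReal_pow (by positivity), ← ENNReal.ofReal_mul (by positivity)]
      _ = ENNReal.ofReal (3/16 * r k ^ n) * ENNReal.ofReal K := by
          rw [key, ENNReal.ofReal_mul (by positivity)]
      _ ≤ ENNReal.ofReal (3/16 * r k ^ n) * B := by
          rw [hK, ENNReal.ofReal_toReal hBfin]
  -- lower bound for the volume of E k for bad rings
  have hEvol : ∀ k ∈ bad, ENNReal.ofReal (3/16 * r k ^ n * K) ≤ volume (E k) := by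
    intro k hk
    have hkk : volume (R k) ≤ 2 * volume (Aᶜ ∩ R k) := hk
    have hcover : Aᶜ ∩ R k ⊆
        E k ∪ {y : EuclideanSpace ℝ (Fin n) | |y i0| ≤ ε * r (k+1) ∧ ‖y‖ ≤ r k} := by
      intro y hy
      by_cases h : ε * r (k+1) < |y i0|
      · exact Or.inl ⟨hy, h⟩
      · exact Or.inr ⟨not_lt.1 h, hy.2.2⟩
    set X : ℝ≥0∞ := ENNReal.ofReal (3/16 * r k ^ n) * B with hX
    have hXfin : X ≠ ⊤ := ENNReal.mul_ne_top ENNReal.ofReal_ne_top hBfin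
    have hR4 : 4 * X ≤ volume (R k) := by
      refine le_trans (le_of_eq ?_) (hRvol k)
      rw [hX, ← mul_assoc]
      congr 1
      rw [show (3:ℝ)/4 * r k ^ n = 4 * (3/16 * r k ^ n) by ring,
        ENNReal.ofReal_mul (by norm_num : (0:ℝ) ≤ 4), ENNReal.ofReal_ofNat]
    have step : volume (R k) ≤ 2 * volume (E k) + 2 * X := by
      calc volume (R k) ≤ 2 * volume (Aᶜ ∩ R k) := hkk
        _ ≤ 2 * (volume (E k) +
              volume {y : EuclideanSpace ℝ (Fin n) | |y i0| ≤ ε * r (k+1) ∧ ‖y‖ ≤ r k}) := by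
            gcongr
            exact (measure_mono hcover).trans (measure_union_le _ _)
        _ ≤ 2 * (volume (E k) + X) := by gcongr; exact hslab k
        _ = 2 * volume (E k) + 2 * X := by ring
    have h1 : 2 * X + 2 * X ≤ 2 * volume (E k) + 2 * X := by
      calc 2 * X + 2 * X = 4 * X := by ring
      _ ≤ volume (R k) := hR4
      _ ≤ 2 * volume (E k) + 2 * X := step
    have h2 : X ≤ volume (E k) := by
      have h3 := (ENNReal.add_le_add_iff_right (by
        exact ENNReal.mul_ne_top (by norm_num) hXfin)).1 h1
      exact (ENNReal.mul_le_mul_iff_right (by norm_num) (by norm_num)).1 h3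
    calc ENNReal.ofReal (3/16 * r k ^ n * K)
        = ENNReal.ofReal (3/16 * r k ^ n) * ENNReal.ofReal K :=
          ENNReal.ofReal_mul (by positivity)
      _ ≤ X := by rw [hX, hK, ENNReal.ofReal_toReal hBfin]
      _ ≤ volume (E k) := h2
  -- per-ring integral bound
  have hring : ∀ k ∈ bad, ENNReal.ofReal (c * f₀) ≤ ∫⁻ y in E k, g y := by
    intro k hk
    have ht : 0 < r k := hrpos k
    have ht1 : 0 < r (k+1) := hrpos (k+1)
    set m : ℝ := f₀ * (r (k+1) ^ σ * (ε * r (k+1))^2 / r k ^ p) with hm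
    have hm0 : 0 ≤ m := by rw [hm]; positivity
    have hpoint : ∀ y ∈ E k, ENNReal.ofReal m ≤ g y := by
      intro y hy
      obtain ⟨⟨hyA, hyR⟩, hy0⟩ := hy
      have hyA' : ¬ (Γ (x₀ + y) - Γ x₀ ≤ f₀ * ‖y‖ ^ σ) := hyA
      have hyR1 : r (k+1) < ‖y‖ := hyR.1
      have hyR2 : ‖y‖ ≤ r k := hyR.2
      have hy0' : ε * r (k+1) < |y i0| := hy0
      have hsd : f₀ * r (k+1) ^ σ ≤ secondDiff Γ x₀ y := by
        have h1 : r (k+1) ^ σ ≤ ‖y‖ ^ σ := Real.rpow_le_rpow ht1.le hyR1.le hσ0.le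
        have h2 := hmin (x₀ - y)
        have h4 : f₀ * r (k+1) ^ σ ≤ f₀ * ‖y‖ ^ σ :=
          mul_le_mul_of_nonneg_left h1 hf₀.le
        have h5 := not_le.1 hyA'
        simp only [secondDiff]
        linarith
      have hy2 : (ε * r (k+1))^2 ≤ (y i0)^2 := by
        rw [← sq_abs (y i0)]
        exact pow_le_pow_left₀ (by positivity) hy0'.le 2
      have hnpos : (0:ℝ) < ‖y‖ := ht1.trans hyR1
      have hnorm : (0:ℝ) < ‖y‖ ^ p := Real.rpow_pos_of_pos hnpos p
      have hnorm2 : ‖y‖ ^ p ≤ r k ^ p := Real.rpow_le_rpow (norm_nonneg y) hyR2 hppos.le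
      have hnum : f₀ * (r (k+1) ^ σ * (ε * r (k+1))^2) ≤ secondDiff Γ x₀ y * (y i0)^2 := by
        calc f₀ * (r (k+1) ^ σ * (ε * r (k+1))^2)
            = (f₀ * r (k+1) ^ σ) * (ε * r (k+1))^2 := by ring
          _ ≤ secondDiff Γ x₀ y * (y i0)^2 :=
            mul_le_mul hsd hy2 (by positivity) (le_trans (by positivity) hsd)
      show ENNReal.ofReal m ≤ ENNReal.ofReal (secondDiff Γ x₀ y * (y i0) ^ 2 / ‖y‖ ^ p)
      apply ENNReal.ofReal_le_ofReal
      calc m = f₀ * (r (k+1) ^ σ * (ε * r (k+1))^2) / r k ^ p := by rw [hm]; ring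
        _ ≤ secondDiff Γ x₀ y * (y i0)^2 / ‖y‖ ^ p :=
          div_le_div₀ (le_trans (by positivity) hnum) hnum hnorm hnorm2
    -- lower bound on m
    have hu : (0:ℝ) < r k ^ σ := Real.rpow_pos_of_pos ht σ
    have hm_low : f₀ * ε^2 / (16 * r k ^ n) ≤ m := by
      have h2σ : (2:ℝ) ^ σ ≤ 4 := by
        calc (2:ℝ)^σ ≤ 2^(2:ℝ) := Real.rpow_le_rpow_of_exponent_le one_le_two hσ2.le
        _ = 4 := by
            rw [show (2:ℝ) = ((2:ℕ):ℝ) from by norm_num, Real.rpow_natCast]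
            norm_num
      have h2σ0 : (0:ℝ) < 2 ^ σ := Real.rpow_pos_of_pos two_pos σ
      have h1 : r k ^ σ / 4 ≤ r (k+1) ^ σ := by
        rw [hrsucc k, Real.div_rpow ht.le (by norm_num : (0:ℝ) ≤ 2)]
        gcongr
      have h2 : (ε * r (k+1))^2 = ε^2 * r k ^2 / 4 := by
        rw [hrsucc k]; ring
      have h3 : r k ^ p = r k ^ n * r k ^ σ * r k ^ 2 := by
        rw [hp, Real.rpow_add ht, Real.rpow_add ht, Real.rpow_natCast,
          show ((2:ℝ) = ((2:ℕ):ℝ)) from by norm_num, Real.rpow_natCast]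
      have h5 : f₀ * (r k ^ σ / 4 * (ε^2 * r k ^2 / 4) / (r k ^ n * r k ^ σ * r k ^ 2)) ≤ m := by
        rw [hm, h2, h3]
        gcongr
      refine le_trans (le_of_eq ?_) h5
      have h6 : r k ^ σ ≠ 0 := hu.ne'
      have h7 : r k ≠ 0 := ht.ne'
      field_simp
      ring
    have hM : c * f₀ ≤ m * (3/16 * r k ^ n * K) := by
      have heq : (f₀ * ε^2 / (16 * r k ^ n)) * (3/16 * r k ^ n * K) = c * f₀ := by
        rw [hc]
        field_simp
        ring
      calc c * f₀ = (f₀ * ε^2 / (16 * r k ^ n)) * (3/16 * r k ^ n * K) := heq.symm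
        _ ≤ m * (3/16 * r k ^ n * K) :=
          mul_le_mul_of_nonneg_right hm_low (by positivity)
    calc ENNReal.ofReal (c * f₀) ≤ ENNReal.ofReal (m * (3/16 * r k ^ n * K)) :=
          ENNReal.ofReal_le_ofReal hM
      _ = ENNReal.ofReal m * ENNReal.ofReal (3/16 * r k ^ n * K) :=
          ENNReal.ofReal_mul hm0
      _ ≤ ENNReal.ofReal m * volume (E k) := by gcongr; exact hEvol k hk
      _ = ∫⁻ _ in E k, ENNReal.ofReal m := (setLIntegral_const _ _).symm
      _ ≤ ∫⁻ y in E k, g y := setLIntegral_mono' (hEm k) hpoint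
  -- disjointness
  have hRdisj : ∀ {j k : ℕ}, j < k → Disjoint (R j) (R k) := by
    intro j k hjk
    rw [Set.disjoint_left]
    intro y hyj hyk
    have h1 : ‖y‖ ≤ r k := hyk.2
    have h2 : r (j+1) < ‖y‖ := hyj.1
    have h3 := hrmono (show j+1 ≤ k from hjk)
    linarith
  have hEdisj : ∀ {j k : ℕ}, j ≠ k → Disjoint (E j) (E k) := by
    intro j k hjk
    have hsub : ∀ l, E l ⊆ R l := fun l y hy => hy.1.2
    rcases lt_or_gt_of_ne hjk with h | h
    · exact ((hRdisj h).mono (hsub j) (hsub k))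
    · exact ((hRdisj h).symm.mono (hsub j) (hsub k))
  -- cardinality bound for finite subsets of bad
  have hcard : ∀ S : Finset ℕ, ↑S ⊆ bad → (S.card : ℝ) ≤ (1/c) / ((2 - σ) * lam) := by
    intro S hS
    have hsum : (S.card : ℝ≥0∞) * ENNReal.ofReal (c * f₀) ≤ ∫⁻ y, g y := by
      calc (S.card : ℝ≥0∞) * ENNReal.ofReal (c * f₀)
          = ∑ _k ∈ S, ENNReal.ofReal (c * f₀) := by
            rw [Finset.sum_const, nsmul_eq_mul]
        _ ≤ ∑ k ∈ S, ∫⁻ y in E k, g y :=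
            Finset.sum_le_sum (fun k hk => hring k (hS hk))
        _ = ∫⁻ y in ⋃ k ∈ S, E k, g y :=
            (lintegral_biUnion_finset
              (fun j hj k hk hjk => hEdisj hjk) (fun k _ => hEm k) _).symm
        _ ≤ ∫⁻ y, g y := setLIntegral_le_lintegral _ _
    have h'' : ENNReal.ofReal ((lam * (2 - σ)) * ((S.card : ℝ) * (c * f₀)))
        ≤ ENNReal.ofReal f₀ := by
      calc ENNReal.ofReal ((lam * (2 - σ)) * ((S.card : ℝ) * (c * f₀)))
          = ENNReal.ofReal (lam * (2 - σ)) *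
              ((S.card : ℝ≥0∞) * ENNReal.ofReal (c * f₀)) := by
            rw [ENNReal.ofReal_mul (mul_nonneg hlam.le (by linarith : (0:ℝ) ≤ 2 - σ)),
              ENNReal.ofReal_mul (Nat.cast_nonneg _),
              ENNReal.ofReal_natCast]
        _ ≤ ENNReal.ofReal (lam * (2 - σ)) * ∫⁻ y, g y := mul_le_mul_right hsum _
        _ ≤ ENNReal.ofReal f₀ := hint'
    have h' : lam * (2 - σ) * ((S.card : ℝ) * (c * f₀)) ≤ f₀ :=
      (ENNReal.ofReal_le_ofReal_iff hf₀.le).1 h''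
    have h2σ : (0:ℝ) < 2 - σ := by linarith
    have hpos : (0:ℝ) < c * ((2 - σ) * lam) := by positivity
    rw [div_div]
    rw [le_div_iff₀ hpos]
    have h2 : ((S.card:ℝ) * (c * ((2 - σ) * lam))) * f₀ ≤ 1 * f₀ := by
      calc ((S.card:ℝ) * (c * ((2 - σ) * lam))) * f₀
          = lam * (2 - σ) * ((S.card:ℝ) * (c * f₀)) := by ring
        _ ≤ f₀ := h'
        _ = 1 * f₀ := (one_mul f₀).symm
    exact le_of_mul_le_mul_right h2 hf₀
  -- conclusion
  have hfin : bad.Finite := by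
    by_contra hinf
    have hinf' : bad.Infinite := hinf
    obtain ⟨T, hTsub, hTcard⟩ :=
      hinf'.exists_subset_card_eq (⌈(1/c)/((2 - σ)*lam)⌉₊ + 1)
    have h1 := hcard T hTsub
    rw [hTcard] at h1
    have h2 := Nat.le_ceil ((1/c)/((2 - σ)*lam))
    push_cast at h1
    linarith
  refine ⟨hfin, ?_⟩
  rw [Nat.card_eq_card_finite_toFinset hfin]
  exact hcard hfin.toFinset (by simp [Set.Finite.coe_toFinset])
end
end

section
/- Let n ≥ 2, σ ∈ (0,2), and 0 < λ ≤ nΛ. Let v : ℝ^n → ℝ be bounded and Lebesgue measurable, and let x ∈ ℝ^n be such that ∫_{ℝ^n} |δv(x,y)|/|y|^{n+σ} dy < ∞. Define the symmetric matrix H(x) := ((n+σ−2)(n+σ)/2)·A(n,2−σ)·∫_{ℝ^n} δv(x,y)·[ y yᵀ/|y|^{n+σ+2} − Id/((n+σ)|y|^{n+σ}) ] dy. If both h_σ(v,x) and H(x) are positive semidefinite, then M⁻(v,x) ≥ 0 and there is a constant C(n,σ) > 0 depending only on n and σ such that det(H(x)) ≤ ((C(n,σ)/λ)·M⁻(v,x))^n.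 -/
open MeasureTheory

noncomputable section

/-- The matrix `H(x)` appearing as the formal Hessian of the Riesz potential. -/
def HMatFull (n : ℕ) (σ : ℝ) (v : EuclideanSpace ℝ (Fin n) → ℝ)
    (x : EuclideanSpace ℝ (Fin n)) : Matrix (Fin n) (Fin n) ℝ :=
  Matrix.of fun i j =>
    (((n : ℝ) + σ - 2) * ((n : ℝ) + σ) / 2) * rieszA n (2 - σ) *
      ∫ y : EuclideanSpace ℝ (Fin n),
        secondDiff v x y * (y i * y j / ‖y‖ ^ ((n : ℝ) + σ + 2) -
          (if i = j then 1 else 0) / (((n : ℝ) + σ) * ‖y‖ ^ ((n : ℝ) + σ)))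

namespace Stmt13Aux
open Matrix
set_option linter.unusedSectionVars false

lemma diag_nonneg {m : ℕ} {A : Matrix (Fin m) (Fin m) ℝ} (hA : A.PosSemidef) : ∀ i, 0 ≤ A i i := by
  intro i
  exact hA.diag_nonneg

lemma trace_nonneg' {m : ℕ} {A : Matrix (Fin m) (Fin m) ℝ} (hA : A.PosSemidef) : 0 ≤ A.trace :=
  Finset.sum_nonneg fun i _ => diag_nonneg hA i

lemma sum_mul_nonneg {m : ℕ} {A B : Matrix (Fin m) (Fin m) ℝ} (hA : A.PosSemidef)
    (hB : B.PosSemidef) : 0 ≤ ∑ i, ∑ j, A i j * B i j := by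
  have hBt : Bᵀ = B := by
    ext i j
    exact congrFun (congrFun hB.isHermitian i) j
  have key : (∑ i, ∑ j, A i j * B i j) = (A * B).trace := by
    simp only [Matrix.trace, Matrix.diag, Matrix.mul_apply]
    refine Finset.sum_congr rfl fun i _ => Finset.sum_congr rfl fun j _ => ?_
    conv_lhs => rw [← hBt]
    rfl
  rw [key]
  obtain ⟨s, hst, hss⟩ : ∃ s : Matrix (Fin m) (Fin m) ℝ, sᴴ = s ∧ s * s = B :=
    by
      letI : PartialOrder (Matrix (Fin m) (Fin m) ℝ) := Matrix.instPartialOrder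
      letI : StarOrderedRing (Matrix (Fin m) (Fin m) ℝ) := Matrix.instStarOrderedRing
      letI : NonnegSpectrumClass ℝ (Matrix (Fin m) (Fin m) ℝ) := Matrix.instNonnegSpectrumClass
      obtain ⟨X, hX, -, hX3⟩ :=
        sub_zero B ▸ CFC.exists_sqrt_of_isSelfAdjoint_of_quasispectrumRestricts hB.isHermitian
          (QuasispectrumRestricts.nnreal_of_nonneg hB.nonneg)
      exact ⟨X, hX.star_eq, by simpa using hX3⟩
  have hpsd : (s * A * s).PosSemidef := by
    have := hA.conjTranspose_mul_mul_same s
    rwa [hst] at this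
  have h2 : (A * B).trace = (s * A * s).trace := by
    rw [← hss, ← mul_assoc, Matrix.trace_mul_comm, ← mul_assoc]
  rw [h2]
  exact Finset.sum_nonneg fun i _ => diag_nonneg hpsd i

lemma det_le_trace_div {m : ℕ} {A : Matrix (Fin m) (Fin m) ℝ} (hA : A.PosSemidef) :
    A.det ≤ (A.trace / m) ^ m := by
  have hH := hA.isHermitian
  have hdet : A.det = ∏ i, hH.eigenvalues i := by simpa using hH.det_eq_prod_eigenvalues
  have htr : A.trace = ∑ i, hH.eigenvalues i := by
    conv_lhs => rw [hH.spectral_theorem]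
    rw [Unitary.conjStarAlgAut_apply, Matrix.trace_mul_cycle, Unitary.coe_star_mul_self, one_mul]
    simp [Matrix.trace_diagonal]
  have hev : ∀ i, 0 ≤ hH.eigenvalues i := hA.eigenvalues_nonneg
  rcases Nat.eq_zero_or_pos m with hm | hm
  · subst hm
    simp [hdet, htr]
  have amgm := Real.geom_mean_le_arith_mean_weighted Finset.univ
    (fun _ => (m : ℝ)⁻¹) hH.eigenvalues (fun i _ => by positivity)
    (by simp [Finset.card_univ]; field_simp) (fun i _ => hev i)
  have hpow : (∏ i, hH.eigenvalues i ^ ((m : ℝ)⁻¹)) ^ m = ∏ i, hH.eigenvalues i := by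
    rw [← Finset.prod_pow]
    refine Finset.prod_congr rfl fun i _ => ?_
    rw [← Real.rpow_natCast (hH.eigenvalues i ^ ((m:ℝ)⁻¹)) m, ← Real.rpow_mul (hev i),
      inv_mul_cancel₀ (by positivity), Real.rpow_one]
  calc A.det = (∏ i, hH.eigenvalues i ^ ((m : ℝ)⁻¹)) ^ m := by rw [hpow, hdet]
    _ ≤ (∑ i, (m:ℝ)⁻¹ * hH.eigenvalues i) ^ m := by
        apply pow_le_pow_left₀ (Finset.prod_nonneg fun i _ => Real.rpow_nonneg (hev i) _) amgm
    _ = (A.trace / m) ^ m := by rw [htr, ← Finset.mul_sum]; ring_nf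

lemma psd_smul_one (c : ℝ) (hc : 0 ≤ c) {m : ℕ} :
    (c • (1 : Matrix (Fin m) (Fin m) ℝ)).PosSemidef := by
  constructor
  · simp [Matrix.IsHermitian]
  · intro y
    exact (Matrix.PosSemidef.one.smul hc).2 y

section Analytic

variable {n : ℕ} {σ : ℝ} {v : EuclideanSpace ℝ (Fin n) → ℝ} {x : EuclideanSpace ℝ (Fin n)}

lemma secondDiff_zero : secondDiff v x 0 = 0 := by simp [secondDiff]; ring

lemma meas_sd (hv : Measurable v) : Measurable (fun y => secondDiff v x y) := by
  unfold secondDiff; fun_prop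

lemma coord_le_norm (y : EuclideanSpace ℝ (Fin n)) (i : Fin n) : |y i| ≤ ‖y‖ := by
  rw [EuclideanSpace.norm_eq y, ← Real.sqrt_sq_eq_abs]
  apply Real.sqrt_le_sqrt
  have := Finset.single_le_sum (f := fun j => ‖y j‖^2) (fun j _ => sq_nonneg _)
    (Finset.mem_univ i)
  simpa [Real.norm_eq_abs, sq_abs] using this

lemma meas_coord (i : Fin n) : Measurable (fun y : EuclideanSpace ℝ (Fin n) => y i) :=
  (EuclideanSpace.proj i).continuous.measurable

lemma meas_rpow (p : ℝ) (hp : 0 ≤ p) :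
    Measurable (fun y : EuclideanSpace ℝ (Fin n) => ‖y‖ ^ p) :=
  (continuous_norm.rpow_const fun _ => Or.inr hp).measurable

variable (hσ : σ ∈ Set.Ioo (0:ℝ) 2) (hn : 2 ≤ n) (hv : Measurable v)
  (hInt : Integrable (fun y : EuclideanSpace ℝ (Fin n) =>
    |secondDiff v x y| / ‖y‖ ^ ((n : ℝ) + σ)))

include hσ hn hv hInt

lemma int_f (i j : Fin n) :
    Integrable (fun y : EuclideanSpace ℝ (Fin n) =>
      secondDiff v x y * (y i * y j) / ‖y‖ ^ ((n : ℝ) + σ + 2)) := by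
  have hσ0 : (0:ℝ) < σ := hσ.1
  have hns : (0:ℝ) ≤ (n:ℝ) + σ := by positivity
  refine hInt.mono (Measurable.aestronglyMeasurable ?_) (ae_of_all _ fun y => ?_)
  · exact ((meas_sd hv).mul ((meas_coord i).mul (meas_coord j))).div (meas_rpow _ (by linarith [hσ.1, (Nat.cast_nonneg n : (0:ℝ) ≤ n)]))
  · rcases eq_or_ne y 0 with rfl | hy
    · simp [secondDiff_zero]
    · have hy0 : (0:ℝ) < ‖y‖ := norm_pos_iff.mpr hy
      have hr1 : (0:ℝ) < ‖y‖ ^ ((n:ℝ) + σ) := Real.rpow_pos_of_pos hy0 _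
      have hr2 : (0:ℝ) < ‖y‖ ^ ((n:ℝ) + σ + 2) := Real.rpow_pos_of_pos hy0 _
      simp only [Real.norm_eq_abs, abs_div, abs_mul, abs_abs,
        abs_of_pos hr1, abs_of_pos hr2]
      rw [div_le_div_iff₀ hr2 hr1]
      have hsplit : ‖y‖ ^ ((n:ℝ) + σ + 2) = ‖y‖ ^ ((n:ℝ) + σ) * ‖y‖ ^ 2 := by
        rw [Real.rpow_add hy0]
        norm_num
      have hij : |y i| * |y j| ≤ ‖y‖ ^ 2 := by
        rw [sq]
        exact mul_le_mul (coord_le_norm y i) (coord_le_norm y j) (abs_nonneg _) (norm_nonneg _)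
      calc |secondDiff v x y| * (|y i| * |y j|) * ‖y‖ ^ ((n:ℝ) + σ)
          ≤ |secondDiff v x y| * ‖y‖ ^ 2 * ‖y‖ ^ ((n:ℝ) + σ) := by
            gcongr
        _ = |secondDiff v x y| * ‖y‖ ^ ((n:ℝ) + σ + 2) := by rw [hsplit]; ring

lemma int_g :
    Integrable (fun y : EuclideanSpace ℝ (Fin n) =>
      secondDiff v x y / ‖y‖ ^ ((n : ℝ) + σ)) := by
  refine hInt.mono (Measurable.aestronglyMeasurable ?_) (ae_of_all _ fun y => ?_)
  · exact (meas_sd hv).div (meas_rpow _ (by linarith [hσ.1, (Nat.cast_nonneg n : (0:ℝ) ≤ n)]))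
  · simp only [Real.norm_eq_abs, abs_div, abs_abs]
    exact le_rfl


omit hσ hn hv hInt in
lemma sum_f_eq (y : EuclideanSpace ℝ (Fin n)) :
    ∑ i, secondDiff v x y * (y i * y i) / ‖y‖ ^ ((n : ℝ) + σ + 2)
      = secondDiff v x y / ‖y‖ ^ ((n : ℝ) + σ) := by
  rcases eq_or_ne y 0 with rfl | hy
  · simp [secondDiff_zero]
  · have hy0 : (0:ℝ) < ‖y‖ := norm_pos_iff.mpr hy
    rw [← Finset.sum_div, ← Finset.mul_sum]
    have hnorm : ∑ i, y i * y i = ‖y‖ ^ 2 := by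
      rw [EuclideanSpace.norm_eq, Real.sq_sqrt (by positivity)]
      exact Finset.sum_congr rfl fun i _ => by simp [Real.norm_eq_abs, sq_abs, sq]
    have hsplit : ‖y‖ ^ ((n:ℝ) + σ + 2) = ‖y‖ ^ ((n:ℝ) + σ) * ‖y‖ ^ 2 := by
      rw [Real.rpow_add hy0]
      norm_num
    rw [hnorm, hsplit, mul_div_mul_right _ _ (by positivity : (‖y‖:ℝ) ^ 2 ≠ 0)]

lemma trace_int :
    ∑ i, (∫ y : EuclideanSpace ℝ (Fin n),
        secondDiff v x y * (y i * y i) / ‖y‖ ^ ((n : ℝ) + σ + 2))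
      = ∫ y : EuclideanSpace ℝ (Fin n), secondDiff v x y / ‖y‖ ^ ((n : ℝ) + σ) := by
  rw [← integral_finset_sum _ (fun i _ => int_f hσ hn hv hInt i i)]
  congr 1
  funext y
  exact sum_f_eq y

lemma quad_int (A : Matrix (Fin n) (Fin n) ℝ) :
    (∫ y : EuclideanSpace ℝ (Fin n),
        secondDiff v x y * quadForm A y / ‖y‖ ^ ((n : ℝ) + σ + 2))
      = ∑ i, ∑ j, A i j * ∫ y : EuclideanSpace ℝ (Fin n),
          secondDiff v x y * (y i * y j) / ‖y‖ ^ ((n : ℝ) + σ + 2) := by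
  have h1 : ∀ y : EuclideanSpace ℝ (Fin n),
      secondDiff v x y * quadForm A y / ‖y‖ ^ ((n : ℝ) + σ + 2)
        = ∑ i, ∑ j, A i j *
            (secondDiff v x y * (y i * y j) / ‖y‖ ^ ((n : ℝ) + σ + 2)) := by
    intro y
    unfold quadForm
    rw [Finset.mul_sum, Finset.sum_div]
    refine Finset.sum_congr rfl fun i _ => ?_
    rw [Finset.mul_sum, Finset.sum_div]
    refine Finset.sum_congr rfl fun j _ => ?_
    rw [div_eq_mul_inv, div_eq_mul_inv]
    ring
  calc (∫ y : EuclideanSpace ℝ (Fin n),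
        secondDiff v x y * quadForm A y / ‖y‖ ^ ((n : ℝ) + σ + 2))
      = ∫ y : EuclideanSpace ℝ (Fin n), ∑ i, ∑ j, A i j *
            (secondDiff v x y * (y i * y j) / ‖y‖ ^ ((n : ℝ) + σ + 2)) := by
        congr 1; funext y; exact h1 y
    _ = ∑ i, ∑ j, A i j * ∫ y : EuclideanSpace ℝ (Fin n),
          secondDiff v x y * (y i * y j) / ‖y‖ ^ ((n : ℝ) + σ + 2) := by
        rw [integral_finset_sum _ (fun i _ => integrable_finset_sum _
          (fun j _ => (int_f hσ hn hv hInt i j).const_mul (A i j)))]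
        refine Finset.sum_congr rfl fun i _ => ?_
        rw [integral_finset_sum _ (fun j _ => (int_f hσ hn hv hInt i j).const_mul _)]
        exact Finset.sum_congr rfl fun j _ => integral_const_mul _ _

lemma HMat_eq (i j : Fin n) :
    HMatFull n σ v x i j = hMat n σ v x i j -
      (if i = j then (((n:ℝ) + σ - 2) * ((n:ℝ) + σ) / 2) * rieszA n (2 - σ) *
        (∫ y : EuclideanSpace ℝ (Fin n), secondDiff v x y / ‖y‖ ^ ((n:ℝ) + σ))
          / ((n:ℝ) + σ) else 0) := by
  have hσ0 : (0:ℝ) < σ := hσ.1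
  have hns : ((n:ℝ) + σ) ≠ 0 := by positivity
  have h1 : ∀ y : EuclideanSpace ℝ (Fin n),
      secondDiff v x y * (y i * y j / ‖y‖ ^ ((n:ℝ) + σ + 2) -
          (if i = j then (1:ℝ) else 0) / (((n:ℝ) + σ) * ‖y‖ ^ ((n:ℝ) + σ)))
        = secondDiff v x y * (y i * y j) / ‖y‖ ^ ((n:ℝ) + σ + 2)
          - (if i = j then ((n:ℝ) + σ)⁻¹ else 0) *
              (secondDiff v x y / ‖y‖ ^ ((n:ℝ) + σ)) := by
    intro y
    rcases eq_or_ne i j with rfl | hij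
    · simp only [if_pos, one_div, mul_inv]
      ring
    · simp only [if_neg hij, zero_div, sub_zero]
      ring
  unfold HMatFull hMat
  simp only [Matrix.of_apply]
  rw [show (fun y : EuclideanSpace ℝ (Fin n) =>
      secondDiff v x y * (y i * y j / ‖y‖ ^ ((n:ℝ) + σ + 2) -
        (if i = j then (1:ℝ) else 0) / (((n:ℝ) + σ) * ‖y‖ ^ ((n:ℝ) + σ))))
    = (fun y : EuclideanSpace ℝ (Fin n) =>
        secondDiff v x y * (y i * y j) / ‖y‖ ^ ((n:ℝ) + σ + 2)
          - (if i = j then ((n:ℝ) + σ)⁻¹ else 0) *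
              (secondDiff v x y / ‖y‖ ^ ((n:ℝ) + σ))) from funext h1]
  rw [integral_sub (int_f hσ hn hv hInt i j) ((int_g hσ hn hv hInt).const_mul _)]
  rcases eq_or_ne i j with rfl | hij
  · simp only [if_pos]
    rw [integral_const_mul, mul_sub, div_eq_mul_inv]
    ring
  · simp only [if_neg hij, zero_mul]
    simp

end Analytic

end Stmt13Aux


open Stmt13Aux in
/-- if `h_σ(v,x)` and `H(x)` are positive semidefinite then `M⁻(v,x) ≥ 0` and
`det H(x) ≤ ((C(n,σ)/λ)·M⁻(v,x))ⁿ` for a constant depending only on `n` and `σ`. -/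
theorem stmt13 (n : ℕ) (hn : 2 ≤ n) (σ : ℝ) (hσ : σ ∈ Set.Ioo (0 : ℝ) 2) :
    ∃ C : ℝ, 0 < C ∧
      ∀ lam Lam : ℝ, 0 < lam → lam ≤ (n : ℝ) * Lam →
      ∀ v : EuclideanSpace ℝ (Fin n) → ℝ,
        (∃ B : ℝ, ∀ z, |v z| ≤ B) → Measurable v →
      ∀ x : EuclideanSpace ℝ (Fin n),
        Integrable (fun y : EuclideanSpace ℝ (Fin n) =>
          |secondDiff v x y| / ‖y‖ ^ ((n : ℝ) + σ)) →
        (hMat n σ v x).PosSemidef →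
        (HMatFull n σ v x).PosSemidef →
        0 ≤ Mminus n σ lam Lam v x ∧
        (HMatFull n σ v x).det ≤ ((C / lam) * Mminus n σ lam Lam v x) ^ n := by
  obtain ⟨hσ0, hσ2⟩ := hσ
  have hn2 : (2:ℝ) ≤ (n:ℝ) := by exact_mod_cast hn
  have hnpos : (0:ℝ) < n := by linarith
  have h2σ : (0:ℝ) < 2 - σ := by linarith
  set c : ℝ := (((n : ℝ) + σ - 2) * ((n : ℝ) + σ) / 2) * rieszA n (2 - σ) with hc_def
  have hc : 0 < c := by
    have g1 : 0 < Real.Gamma (((n:ℝ) - (2 - σ)) / 2) := Real.Gamma_pos_of_pos (by linarith)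
    have g2 : 0 < Real.Gamma ((2 - σ) / 2) := Real.Gamma_pos_of_pos (by linarith)
    have g3 : 0 < Real.pi ^ ((2 - σ) - (n:ℝ) / 2) := Real.rpow_pos_of_pos Real.pi_pos _
    have hA : 0 < rieszA n (2 - σ) := by
      unfold rieszA
      positivity
    have h5 : 0 < ((n : ℝ) + σ - 2) * ((n : ℝ) + σ) / 2 := by nlinarith
    rw [hc_def]
    positivity
  refine ⟨σ * c / ((n:ℝ) * (2 - σ)), by positivity, ?_⟩
  intro lam Lam hlam hlamLam v hB hv x hInt hPSDh hPSDH
  set C : ℝ := σ * c / ((n:ℝ) * (2 - σ)) with hC_def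
  have hns : (0:ℝ) < (n:ℝ) + σ := by linarith
  set G : ℝ := ∫ y : EuclideanSpace ℝ (Fin n), secondDiff v x y / ‖y‖ ^ ((n:ℝ) + σ) with hG_def
  set t : ℝ := c * G / ((n:ℝ) + σ) with ht_def
  have hmem : ∀ i j : Fin n, hMat n σ v x i j =
      c * ∫ y : EuclideanSpace ℝ (Fin n),
        secondDiff v x y * (y i * y j) / ‖y‖ ^ ((n:ℝ) + σ + 2) := fun i j => rfl
  have hH_eq : ∀ i j : Fin n, HMatFull n σ v x i j
      = hMat n σ v x i j - (if i = j then t else 0) := by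
    intro i j
    rw [HMat_eq ⟨hσ0, hσ2⟩ hn hv hInt i j, ht_def, hc_def, hG_def]
  have htrh : ∑ i, hMat n σ v x i i = c * G := by
    rw [show (∑ i, hMat n σ v x i i) = c * ∑ i, ∫ y : EuclideanSpace ℝ (Fin n),
        secondDiff v x y * (y i * y i) / ‖y‖ ^ ((n:ℝ) + σ + 2) by
      rw [Finset.mul_sum]; exact Finset.sum_congr rfl fun i _ => hmem i i]
    rw [trace_int ⟨hσ0, hσ2⟩ hn hv hInt, hG_def]
  have htrace : (HMatFull n σ v x).trace = σ * t := by
    have h1 : (HMatFull n σ v x).trace = (∑ i, hMat n σ v x i i) - (n:ℝ) * t := by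
      simp only [Matrix.trace, Matrix.diag]
      calc ∑ i, HMatFull n σ v x i i = ∑ i : Fin n, (hMat n σ v x i i - t) := by
            refine Finset.sum_congr rfl fun i _ => ?_
            rw [hH_eq i i, if_pos rfl]
        _ = (∑ i, hMat n σ v x i i) - (n:ℝ) * t := by
            rw [Finset.sum_sub_distrib]
            simp [Finset.card_univ, nsmul_eq_mul]
    have h2 : c * G = ((n:ℝ) + σ) * t := by
      rw [ht_def]
      field_simp
    rw [h1, htrh, h2]
    ring
  have ht : 0 ≤ t := by
    have h0 := trace_nonneg' hPSDH
    rw [htrace] at h0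
    nlinarith
  have hM : ((2 - σ)/c) * (t * lam) ≤ Mminus n σ lam Lam v x := by
    unfold Mminus
    refine le_csInf ?_ ?_
    · refine ⟨(2 - σ) * ∫ y : EuclideanSpace ℝ (Fin n),
        secondDiff v x y * quadForm ((lam/(n:ℝ)) • (1 : Matrix (Fin n) (Fin n) ℝ)) y
          / ‖y‖ ^ ((n : ℝ) + σ + 2),
        (lam/(n:ℝ)) • (1 : Matrix (Fin n) (Fin n) ℝ),
        psd_smul_one _ (by positivity), ?_, ?_, rfl⟩
      · rw [Matrix.trace_smul, Matrix.trace_one]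
        simp only [smul_eq_mul, Finset.card_univ, Fintype.card_fin]
        rw [div_mul_cancel₀ _ (ne_of_gt hnpos)]
      · rw [show Lam • (1 : Matrix (Fin n) (Fin n) ℝ) - (lam/(n:ℝ)) • 1
            = (Lam - lam/(n:ℝ)) • (1 : Matrix (Fin n) (Fin n) ℝ) by rw [sub_smul]]
        refine psd_smul_one _ ?_
        rw [sub_nonneg, div_le_iff₀ hnpos]
        linarith
    · rintro z ⟨A, hApsd, hAtr, -, rfl⟩
      rw [quad_int ⟨hσ0, hσ2⟩ hn hv hInt A]
      have key : c * (∑ i, ∑ j, A i j * ∫ y : EuclideanSpace ℝ (Fin n),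
            secondDiff v x y * (y i * y j) / ‖y‖ ^ ((n:ℝ) + σ + 2))
          = (∑ i, ∑ j, A i j * HMatFull n σ v x i j) + t * A.trace := by
        calc c * (∑ i, ∑ j, A i j * ∫ y : EuclideanSpace ℝ (Fin n),
              secondDiff v x y * (y i * y j) / ‖y‖ ^ ((n:ℝ) + σ + 2))
            = ∑ i, ∑ j, (A i j * HMatFull n σ v x i j
                + if i = j then A i j * t else 0) := by
              rw [Finset.mul_sum]
              refine Finset.sum_congr rfl fun i _ => ?_
              rw [Finset.mul_sum]
              refine Finset.sum_congr rfl fun j _ => ?_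
              have e1 : c * (A i j * ∫ y : EuclideanSpace ℝ (Fin n),
                  secondDiff v x y * (y i * y j) / ‖y‖ ^ ((n:ℝ) + σ + 2))
                  = A i j * hMat n σ v x i j := by
                rw [hmem i j]; ring
              rw [e1, hH_eq i j]
              rcases eq_or_ne i j with rfl | hij
              · simp only [if_pos]
                ring
              · simp [hij]
          _ = (∑ i, ∑ j, A i j * HMatFull n σ v x i j) + t * A.trace := by
              simp only [Finset.sum_add_distrib]
              congr 1
              rw [show (∑ i, ∑ j, if i = j then A i j * t else 0)
                  = ∑ i : Fin n, A i i * t from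
                Finset.sum_congr rfl fun i _ => by simp [Finset.sum_ite_eq]]
              rw [Matrix.trace]
              simp only [Matrix.diag]
              rw [Finset.mul_sum]
              exact Finset.sum_congr rfl fun i _ => mul_comm _ _
      have hS : 0 ≤ ∑ i, ∑ j, A i j * HMatFull n σ v x i j :=
        sum_mul_nonneg hApsd hPSDH
      have hz : (2 - σ) * (∑ i, ∑ j, A i j * ∫ y : EuclideanSpace ℝ (Fin n),
            secondDiff v x y * (y i * y j) / ‖y‖ ^ ((n:ℝ) + σ + 2))
          = ((2 - σ)/c) * (c * (∑ i, ∑ j, A i j * ∫ y : EuclideanSpace ℝ (Fin n),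
            secondDiff v x y * (y i * y j) / ‖y‖ ^ ((n:ℝ) + σ + 2))) := by
        field_simp
      rw [hz, key]
      refine mul_le_mul_of_nonneg_left ?_ (by positivity)
      nlinarith [mul_le_mul_of_nonneg_left hAtr ht]
  constructor
  · refine le_trans ?_ hM
    positivity
  · have hdet := det_le_trace_div hPSDH
    rw [htrace] at hdet
    have hstep : σ * t / (n:ℝ) ≤ (C/lam) * Mminus n σ lam Lam v x := by
      have heq : (C/lam) * (((2 - σ)/c) * (t * lam)) = σ * t / (n:ℝ) := by
        rw [hC_def]
        field_simp
      calc σ * t / (n:ℝ) = (C/lam) * (((2 - σ)/c) * (t * lam)) := heq.symm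
        _ ≤ (C/lam) * Mminus n σ lam Lam v x :=
            mul_le_mul_of_nonneg_left hM (by positivity)
    calc (HMatFull n σ v x).det ≤ (σ * t / (n:ℝ)) ^ n := hdet
      _ ≤ ((C/lam) * Mminus n σ lam Lam v x) ^ n :=
          pow_le_pow_left₀ (div_nonneg (mul_nonneg hσ0.le ht) hnpos.le) hstep n
end
end
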